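/- Let G be a finite simple graph and let M ⊆ E be an ev-dominating set of G such that no two distinct edges of M share a vertex. Then V_G(M) is a paired-dominating set of G of cardinality 2|M|. -/

import Mathlib

open SimpleGraph

variable {V : Type*}

/-- `D` is a dominating set of `G`: every vertex outside `D` has a neighbor in `D`. -/
def IsDomSet (G : SimpleGraph V) (D : Set V) : Prop :=
  ∀ v ∉ D, ∃ u ∈ D, G.Adj u v

/-- The edge `e` ev-dominates the vertex `v`: `e` is incident to `v` or to a neighbor of `v`. -/
def EvDom (G : SimpleGraph V) (e : Sym2 V) (v : V) : Prop :=
  v ∈ e ∨ ∃ u ∈ e, G.Adj u v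

/-- `M` is an edge-vertex dominating set of `G`. -/
def IsEvDomSet (G : SimpleGraph V) (M : Set (Sym2 V)) : Prop :=
  M ⊆ G.edgeSet ∧ ∀ v : V, ∃ e ∈ M, EvDom G e v

/-- `M` is a minimum edge-vertex dominating set of `G`. -/
def IsMinEvDomSet (G : SimpleGraph V) (M : Set (Sym2 V)) : Prop :=
  IsEvDomSet G M ∧ ∀ M' : Set (Sym2 V), IsEvDomSet G M' → M.ncard ≤ M'.ncard

/-- The edge-vertex domination number `γ_ev(G)`. -/
noncomputable def evNum (G : SimpleGraph V) : ℕ :=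
  sInf {n | ∃ M : Set (Sym2 V), IsEvDomSet G M ∧ M.ncard = n}

/-- The set of all endpoints of edges in `M`. -/
def edgeVerts (M : Set (Sym2 V)) : Set V := {v | ∃ e ∈ M, v ∈ e}

/-- `M` is a perfect matching of the induced subgraph `G[D]`: a set of edges of `G`
with all endpoints in `D`, such that every vertex of `D` lies in exactly one edge of `M`. -/
def IsPMOn (G : SimpleGraph V) (D : Set V) (M : Set (Sym2 V)) : Prop :=
  M ⊆ G.edgeSet ∧ (∀ e ∈ M, ∀ v ∈ e, v ∈ D) ∧ ∀ v ∈ D, ∃! e, e ∈ M ∧ v ∈ e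

/-- `D` is a paired-dominating set of `G`. -/
def IsPairedDomSet (G : SimpleGraph V) (D : Set V) : Prop :=
  IsDomSet G D ∧ ∃ M : Set (Sym2 V), IsPMOn G D M

/-- `D` is a minimum paired-dominating set of `G`. -/
def IsMinPairedDomSet (G : SimpleGraph V) (D : Set V) : Prop :=
  IsPairedDomSet G D ∧ ∀ D' : Set V, IsPairedDomSet G D' → D.ncard ≤ D'.ncard

/-- The paired-domination number `γ_pr(G)`. -/
noncomputable def prNum (G : SimpleGraph V) : ℕ :=
  sInf {n | ∃ D : Set V, IsPairedDomSet G D ∧ D.ncard = n}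

/-- No two distinct edges of `M` share a vertex. -/
def NoSharedVertex (M : Set (Sym2 V)) : Prop :=
  ∀ e ∈ M, ∀ f ∈ M, e ≠ f → ∀ v : V, v ∈ e → v ∉ f

/-- `G` has no isolated vertex. -/
def NoIsolated (G : SimpleGraph V) : Prop := ∀ v : V, ∃ u, G.Adj u v


lemma card_edgeVerts_aux [Fintype V] :
    ∀ (M : Set (Sym2 V)), M.Finite →
      (∀ e ∈ M, ¬ e.IsDiag) → NoSharedVertex M →
      (edgeVerts M).ncard = 2 * M.ncard := by
  intro M hfin
  refine Set.Finite.induction_on (motive := fun M _ => (∀ e ∈ M, ¬ e.IsDiag) → NoSharedVertex M →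
      (edgeVerts M).ncard = 2 * M.ncard) M hfin ?_ ?_
  · intro _ _
    simp [edgeVerts, Set.ncard_empty]
  · intro e s he hs ih hnd hdisj
    have hnd' : ∀ f ∈ s, ¬ f.IsDiag := fun f hf => hnd f (Set.mem_insert_of_mem _ hf)
    have hdisj' : NoSharedVertex s := fun a ha b hb hab =>
      hdisj a (Set.mem_insert_of_mem _ ha) b (Set.mem_insert_of_mem _ hb) hab
    have hsplit : edgeVerts (insert e s) = {v | v ∈ e} ∪ edgeVerts s := by
      ext v
      constructor
      · rintro ⟨f, hf, hv⟩
        rcases hf with rfl | hf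
        · exact Or.inl hv
        · exact Or.inr ⟨f, hf, hv⟩
      · rintro (hv | ⟨f, hf, hv⟩)
        · exact ⟨e, Set.mem_insert _ _, hv⟩
        · exact ⟨f, Set.mem_insert_of_mem _ hf, hv⟩
    obtain ⟨a, b⟩ := e
    have hab : a ≠ b := by
      intro h; exact hnd s(a,b) (Set.mem_insert _ _) (by simp [h])
    have hset : {v | v ∈ s(a,b)} = ({a, b} : Set V) := by
      ext v; simp [Sym2.mem_iff]
    have hdisj2 : Disjoint {v | v ∈ s(a,b)} (edgeVerts s) := by
      rw [Set.disjoint_left]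
      rintro v hv ⟨f, hf, hvf⟩
      have hne : s(a,b) ≠ f := by rintro rfl; exact he hf
      exact hdisj s(a,b) (Set.mem_insert _ _) f (Set.mem_insert_of_mem _ hf) hne v hv hvf
    rw [hsplit, Set.ncard_union_eq hdisj2 (Set.toFinite _) (Set.toFinite _),
      ih hnd' hdisj', hset, Set.ncard_insert_of_notMem he hs,
      Set.ncard_pair hab]
    ring

theorem stmt14 [Fintype V] (G : SimpleGraph V) (M : Set (Sym2 V))
    (hM : IsEvDomSet G M) (hd : NoSharedVertex M) :
    IsPairedDomSet G (edgeVerts M) ∧ (edgeVerts M).ncard = 2 * M.ncard := by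
  obtain ⟨hsub, hcov⟩ := hM
  refine ⟨⟨?_, M, hsub, ?_, ?_⟩, ?_⟩
  · intro v hv
    obtain ⟨e, he, hev⟩ := hcov v
    rcases hev with hv' | ⟨u, hu, hadj⟩
    · exact absurd ⟨e, he, hv'⟩ hv
    · exact ⟨u, ⟨e, he, hu⟩, hadj⟩
  · intro e he v hv; exact ⟨e, he, hv⟩
  · rintro v ⟨e, he, hv⟩
    refine ⟨e, ⟨he, hv⟩, ?_⟩
    rintro f ⟨hf, hvf⟩
    by_contra hne
    exact hd f hf e he hne v hvf hv
  · exact card_edgeVerts_aux M (Set.toFinite _)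
      (fun e he => SimpleGraph.not_isDiag_of_mem_edgeSet G (hsub he)) hd
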